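/- Let G be a 2-tough non-Hamiltonian graph on n ≥ 3 vertices possessing a Hamiltonian path v_1, v_2, …, v_n with x = v_1 and y = v_n non-adjacent and d(x) + d(y) = n − 1. Let S be the set of vertices adjacent to neither x nor y. Then for every v_i ∈ S, every neighbor of v_i is of the form v_j with either j < i and v_{j+1} ∈ S, or j > i and v_{j−1} ∈ S. -/

import Mathlib

open SimpleGraph

/-- A graph `G` is `t`-tough if for every set `S` of vertices such that `G - S` is
disconnected, `t * c(G - S) ≤ |S|`, where `c` counts connected components. -/
def Tough {V : Type*} [Fintype V] (t : ℝ) (G : SimpleGraph V) : Prop :=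
  ∀ S : Finset V, ¬ (G.induce ((↑S : Set V)ᶜ)).Connected →
    t * (Nat.card (G.induce ((↑S : Set V)ᶜ)).ConnectedComponent) ≤ S.card

/-- Let `G` be a 2-tough non-Hamiltonian graph on `n ≥ 3` vertices possessing a
Hamiltonian path `v_1, v_2, …, v_n` with `x = v_1` and `y = v_n` non-adjacent and
`d(x) + d(y) = n - 1`. Let `S` be the set of vertices (other than `x` and `y`)
adjacent to neither `x` nor `y`. Then for every `v_i ∈ S`, every neighbor of `v_i` is
of the form `v_j` with either `j < i` and `v_{j+1} ∈ S`, or `j > i` and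
`v_{j-1} ∈ S`. -/

private lemma exists_segment {V : Type*} {G : SimpleGraph V} (c : ℕ → V) (a : ℕ) :
    ∀ b, a ≤ b → (∀ k, a ≤ k → k < b → G.Adj (c k) (c (k + 1))) →
      ∃ p : G.Walk (c a) (c b),
        p.support = (List.range' a (b - a + 1)).map c ∧
        ∀ e ∈ p.edges, ∃ k, a ≤ k ∧ k < b ∧ e = s(c k, c (k + 1)) := by
  refine Nat.le_induction ?_ ?_
  · intro _
    exact ⟨Walk.nil, by simp, by simp⟩
  · intro b hab ih hadj
    obtain ⟨p, hsup, hedge⟩ := ih (fun k h1 h2 => hadj k h1 (by omega))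
    refine ⟨p.concat (hadj b hab (by omega)), ?_, ?_⟩
    · have hr : List.range' a (b + 1 - a + 1) = List.range' a (b - a + 1) ++ [b + 1] := by
        rw [show b + 1 - a + 1 = (b - a + 1) + 1 from by omega, List.range'_concat,
          show a + 1 * (b - a + 1) = b + 1 from by omega]
      rw [Walk.support_concat, hsup, hr, List.map_append]
      simp
    · intro e he
      rw [Walk.edges_concat, List.concat_eq_append, List.mem_append] at he
      rcases he with he | he
      · obtain ⟨k, h1, h2, h3⟩ := hedge e he
        exact ⟨k, h1, by omega, h3⟩
      · exact ⟨b, hab, by omega, by simpa using he⟩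

private lemma ham_of_cycle {V : Type*} [Fintype V] [DecidableEq V] {G : SimpleGraph V} {m : ℕ}
    (hm : 3 ≤ m) (c : ℕ → V)
    (hcinj : ∀ i, i < m → ∀ j, j < m → c i = c j → i = j)
    (hcsurj : ∀ w : V, ∃ i, i < m ∧ c i = w)
    (hcadj : ∀ k, k + 1 < m → G.Adj (c k) (c (k + 1)))
    (hback : G.Adj (c 0) (c (m - 1))) : G.IsHamiltonian := by
  obtain ⟨p, hsup, hedge⟩ := exists_segment (G := G) c 0 (m - 1) (by omega)
      (fun k _ h2 => hcadj k (by omega))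
  rw [show m - 1 - 0 + 1 = m from by omega] at hsup
  have hmem : ∀ w : V, w ∈ p.support := by
    intro w
    obtain ⟨i, hi, rfl⟩ := hcsurj w
    rw [hsup]
    exact List.mem_map_of_mem (f := c) (by rw [List.mem_range'_1]; omega)
  have hnodup : p.support.Nodup := by
    rw [hsup]
    refine List.Nodup.map_on ?_ (List.nodup_range' (s := 0) (n := m))
    intro x hx y hy hxy
    rw [List.mem_range'_1] at hx hy
    exact hcinj x (by omega) y (by omega) hxy
  have hpath : p.IsPath := Walk.IsPath.mk' hnodup
  have hedge0 : s(c 0, c (m - 1)) ∉ p.reverse.edges := by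
    rw [Walk.edges_reverse, List.mem_reverse]
    intro h
    obtain ⟨k, hk0, hkm, hk⟩ := hedge _ h
    rw [Sym2.eq_iff] at hk
    rcases hk with ⟨h1, h2⟩ | ⟨h1, h2⟩
    · have e1 := hcinj 0 (by omega) k (by omega) h1
      have e2 := hcinj (m - 1) (by omega) (k + 1) (by omega) h2
      omega
    · have e1 := hcinj 0 (by omega) (k + 1) (by omega) h1
      omega
  have hcyc : (Walk.cons hback p.reverse).IsCycle :=
    (Walk.cons_isCycle_iff p.reverse hback).mpr ⟨hpath.reverse, hedge0⟩
  intro _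
  refine ⟨c 0, Walk.cons hback p.reverse, ?_⟩
  rw [Walk.isHamiltonianCycle_iff_isCycle_and_support_count_tail_eq_one]
  refine ⟨hcyc, fun a => ?_⟩
  rw [Walk.support_cons, List.tail_cons, Walk.support_reverse, List.count_reverse]
  exact List.count_eq_one_of_mem hnodup (hmem a)

private lemma aux13 {V : Type*} [Fintype V] [DecidableEq V] {n : ℕ} (hn : 3 ≤ n)
    (G : SimpleGraph V) [DecidableRel G.Adj]
    (hham : ¬ G.IsHamiltonian)
    (v : ℕ → V)
    (hinj : ∀ i j, 1 ≤ i → i ≤ n → 1 ≤ j → j ≤ n → v i = v j → i = j)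
    (hsurj : ∀ w : V, ∃ i, 1 ≤ i ∧ i ≤ n ∧ v i = w)
    (hpath : ∀ i, 1 ≤ i → i < n → G.Adj (v i) (v (i + 1)))
    (hnadj : ¬ G.Adj (v 1) (v n))
    (hdeg : G.degree (v 1) + G.degree (v n) = n - 1) :
    ∀ i j, 1 ≤ i → i < n → 1 ≤ j → j ≤ n →
      ¬ G.Adj (v i) (v 1) → ¬ G.Adj (v i) (v n) →
      G.Adj (v i) (v j) → j < i →
      ¬ G.Adj (v (j + 1)) (v 1) ∧ ¬ G.Adj (v (j + 1)) (v n) := by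
  classical
  -- the two key neighbour index sets
  set A : Finset ℕ := (Finset.Icc 1 (n - 1)).filter (fun k => G.Adj (v 1) (v (k + 1))) with hA
  set B : Finset ℕ := (Finset.Icc 1 (n - 1)).filter (fun k => G.Adj (v n) (v k)) with hB
  have hcardA : A.card = G.degree (v 1) := by
    rw [← card_neighborFinset_eq_degree]
    refine Finset.card_bij (fun k _ => v (k + 1)) ?_ ?_ ?_
    · intro k hk
      rw [hA, Finset.mem_filter] at hk
      rw [mem_neighborFinset]
      exact hk.2
    · intro k1 hk1 k2 hk2 h
      rw [hA, Finset.mem_filter, Finset.mem_Icc] at hk1 hk2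
      have := hinj (k1 + 1) (k2 + 1) (by omega) (by omega) (by omega) (by omega) h
      omega
    · intro w hw
      rw [mem_neighborFinset] at hw
      obtain ⟨j, hj1, hjn, rfl⟩ := hsurj w
      have hne1 : j ≠ 1 := by
        rintro rfl
        exact G.irrefl hw
      have hnen : j ≠ n := by
        rintro rfl
        exact hnadj hw
      refine ⟨j - 1, ?_, ?_⟩
      · rw [hA, Finset.mem_filter, Finset.mem_Icc, show j - 1 + 1 = j from by omega]
        exact ⟨by omega, hw⟩
      · show v (j - 1 + 1) = v j
        rw [show j - 1 + 1 = j from by omega]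
  have hcardB : B.card = G.degree (v n) := by
    rw [← card_neighborFinset_eq_degree]
    refine Finset.card_bij (fun k _ => v k) ?_ ?_ ?_
    · intro k hk
      rw [hB, Finset.mem_filter] at hk
      rw [mem_neighborFinset]
      exact hk.2
    · intro k1 hk1 k2 hk2 h
      rw [hB, Finset.mem_filter, Finset.mem_Icc] at hk1 hk2
      exact hinj k1 k2 (by omega) (by omega) (by omega) (by omega) h
    · intro w hw
      rw [mem_neighborFinset] at hw
      obtain ⟨j, hj1, hjn, rfl⟩ := hsurj w
      have hnen : j ≠ n := by
        rintro rfl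
        exact G.irrefl hw
      have hne1 : j ≠ 1 := by
        rintro rfl
        exact hnadj (hw.symm)
      refine ⟨j, ?_, rfl⟩
      rw [hB, Finset.mem_filter, Finset.mem_Icc]
      exact ⟨by omega, hw⟩

  -- A and B are disjoint, else G has a Hamiltonian cycle
  have hdisj : Disjoint A B := by
    rw [Finset.disjoint_left]
    intro k hkA hkB
    rw [hA, Finset.mem_filter, Finset.mem_Icc] at hkA
    rw [hB, Finset.mem_filter, Finset.mem_Icc] at hkB
    obtain ⟨⟨hk1, hkn⟩, e1⟩ := hkA
    obtain ⟨-, e2⟩ := hkB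
    refine hham (ham_of_cycle hn (fun t => if t < k then v (t + 1) else v (n - (t - k)))
      ?_ ?_ ?_ ?_)
    · intro a ha b hb hab
      split_ifs at hab <;>
        (have := hinj _ _ (by omega) (by omega) (by omega) (by omega) hab; omega)
    · intro w
      obtain ⟨i0, h1, h2, rfl⟩ := hsurj w
      by_cases hc : i0 ≤ k
      · refine ⟨i0 - 1, by omega, ?_⟩
        rw [if_pos (by omega)]
        congr 1
        omega
      · refine ⟨k + (n - i0), by omega, ?_⟩
        rw [if_neg (by omega)]
        congr 1
        omega
    · intro t ht
      by_cases h1 : t + 1 < k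
      · rw [if_pos (by omega), if_pos (by omega)]
        exact hpath (t + 1) (by omega) (by omega)
      · by_cases h2 : t + 1 = k
        · rw [if_pos (by omega), if_neg (by omega),
            show n - (t + 1 - k) = n from by omega, show t + 1 = k from h2]
          exact e2.symm
        · rw [if_neg (by omega), if_neg (by omega)]
          have := hpath (n - (t + 1 - k)) (by omega) (by omega)
          rw [show n - (t + 1 - k) + 1 = n - (t - k) from by omega] at this
          exact this.symm
    · rw [if_pos (by omega), if_neg (by omega),
        show n - (n - 1 - k) = k + 1 from by omega]
      exact e1
  -- A ∪ B covers all of [1, n-1]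
  have hunion : A ∪ B = Finset.Icc 1 (n - 1) := by
    refine Finset.eq_of_subset_of_card_le (Finset.union_subset (Finset.filter_subset _ _)
      (Finset.filter_subset _ _)) ?_
    rw [Finset.card_union_of_disjoint hdisj, hcardA, hcardB, hdeg, Nat.card_Icc]
    omega
  have K : ∀ k, 1 ≤ k → k < n → G.Adj (v 1) (v (k + 1)) ∨ G.Adj (v n) (v k) := by
    intro k h1 h2
    have : k ∈ A ∪ B := by
      rw [hunion, Finset.mem_Icc]
      omega
    rw [Finset.mem_union, hA, hB, Finset.mem_filter, Finset.mem_filter] at this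
    tauto
  -- main argument
  intro i j hi1 hin hj1 hjn hix hiy hij hji
  have hi2 : 2 ≤ i := by omega
  have exi1 : G.Adj (v 1) (v (i + 1)) := by
    rcases K i (by omega) (by omega) with h | h
    · exact h
    · exact absurd h.symm hiy
  have eyi1 : G.Adj (v n) (v (i - 1)) := by
    rcases K (i - 1) (by omega) (by omega) with h | h
    · rw [show i - 1 + 1 = i from by omega] at h
      exact absurd h.symm hix
    · exact h
  by_cases hcase : j + 1 = i
  · rw [hcase]
    exact ⟨hix, hiy⟩
  · have hji2 : j + 1 < i := by omega
    constructor
    · -- if v (j+1) were adjacent to v 1, build Hamiltonian cycle C1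
      intro hxj1
      refine hham (ham_of_cycle hn (fun t => if t < j then v (t + 1)
        else if t < j + (n - i + 1) then v (i + (t - j))
        else v (i - 1 - (t - (j + (n - i + 1))))) ?_ ?_ ?_ ?_)
      · intro a ha b hb hab
        split_ifs at hab <;>
          (have := hinj _ _ (by omega) (by omega) (by omega) (by omega) hab; omega)
      · intro w
        obtain ⟨i0, h1, h2, rfl⟩ := hsurj w
        by_cases hc1 : i0 ≤ j
        · refine ⟨i0 - 1, by omega, ?_⟩
          rw [if_pos (by omega)]
          congr 1
          omega
        · by_cases hc2 : i ≤ i0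
          · refine ⟨j + (i0 - i), by omega, ?_⟩
            rw [if_neg (by omega), if_pos (by omega)]
            congr 1
            omega
          · refine ⟨j + (n - i + 1) + (i - 1 - i0), by omega, ?_⟩
            rw [if_neg (by omega), if_neg (by omega)]
            congr 1
            omega
      · intro t ht
        by_cases h1 : t + 1 < j
        · rw [if_pos (by omega), if_pos (by omega)]
          exact hpath (t + 1) (by omega) (by omega)
        · by_cases h2 : t + 1 = j
          · rw [if_pos (by omega), if_neg (by omega), if_pos (by omega),
              show i + (t + 1 - j) = i from by omega, show t + 1 = j from h2]
            exact hij.symm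
          · by_cases h3 : t + 1 < j + (n - i + 1)
            · rw [if_neg (by omega), if_pos (by omega), if_neg (by omega), if_pos (by omega)]
              have := hpath (i + (t - j)) (by omega) (by omega)
              rw [show i + (t - j) + 1 = i + (t + 1 - j) from by omega] at this
              exact this
            · by_cases h4 : t + 1 = j + (n - i + 1)
              · rw [if_neg (by omega), if_pos (by omega), if_neg (by omega), if_neg (by omega),
                  show i + (t - j) = n from by omega,
                  show i - 1 - (t + 1 - (j + (n - i + 1))) = i - 1 from by omega]
                exact eyi1
              · rw [if_neg (by omega), if_neg (by omega), if_neg (by omega), if_neg (by omega)]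
                have := hpath (i - 1 - (t + 1 - (j + (n - i + 1)))) (by omega) (by omega)
                rw [show i - 1 - (t + 1 - (j + (n - i + 1))) + 1
                    = i - 1 - (t - (j + (n - i + 1))) from by omega] at this
                exact this.symm
      · rw [if_pos (by omega), if_neg (by omega), if_neg (by omega),
          show i - 1 - (n - 1 - (j + (n - i + 1))) = j + 1 from by omega]
        exact hxj1.symm
    · -- if v (j+1) were adjacent to v n, build Hamiltonian cycle C2
      intro hyj1
      refine hham (ham_of_cycle hn (fun t => if t < j then v (t + 1)
        else if t < i then v (i - (t - j))
        else v (n - (t - i))) ?_ ?_ ?_ ?_)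
      · intro a ha b hb hab
        split_ifs at hab <;>
          (have := hinj _ _ (by omega) (by omega) (by omega) (by omega) hab; omega)
      · intro w
        obtain ⟨i0, h1, h2, rfl⟩ := hsurj w
        by_cases hc1 : i0 ≤ j
        · refine ⟨i0 - 1, by omega, ?_⟩
          rw [if_pos (by omega)]
          congr 1
          omega
        · by_cases hc2 : i0 ≤ i
          · refine ⟨j + (i - i0), by omega, ?_⟩
            rw [if_neg (by omega), if_pos (by omega)]
            congr 1
            omega
          · refine ⟨i + (n - i0), by omega, ?_⟩
            rw [if_neg (by omega), if_neg (by omega)]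
            congr 1
            omega
      · intro t ht
        by_cases h1 : t + 1 < j
        · rw [if_pos (by omega), if_pos (by omega)]
          exact hpath (t + 1) (by omega) (by omega)
        · by_cases h2 : t + 1 = j
          · rw [if_pos (by omega), if_neg (by omega), if_pos (by omega),
              show i - (t + 1 - j) = i from by omega, show t + 1 = j from h2]
            exact hij.symm
          · by_cases h3 : t + 1 < i
            · rw [if_neg (by omega), if_pos (by omega), if_neg (by omega), if_pos (by omega)]
              have := hpath (i - (t + 1 - j)) (by omega) (by omega)
              rw [show i - (t + 1 - j) + 1 = i - (t - j) from by omega] at this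
              exact this.symm
            · by_cases h4 : t + 1 = i
              · rw [if_neg (by omega), if_pos (by omega), if_neg (by omega), if_neg (by omega),
                  show i - (t - j) = j + 1 from by omega,
                  show n - (t + 1 - i) = n from by omega]
                exact hyj1
              · rw [if_neg (by omega), if_neg (by omega), if_neg (by omega), if_neg (by omega)]
                have := hpath (n - (t + 1 - i)) (by omega) (by omega)
                rw [show n - (t + 1 - i) + 1 = n - (t - i) from by omega] at this
                exact this.symm
      · rw [if_pos (by omega), if_neg (by omega), if_neg (by omega),
          show n - (n - 1 - i) = i + 1 from by omega]
        exact exi1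


theorem stmt_13 {V : Type*} [Fintype V] [DecidableEq V] {n : ℕ} (hn : 3 ≤ n)
    (G : SimpleGraph V) [DecidableRel G.Adj]
    (htough : Tough 2 G) (hham : ¬ G.IsHamiltonian)
    (v : ℕ → V)
    (hinj : ∀ i j, 1 ≤ i → i ≤ n → 1 ≤ j → j ≤ n → v i = v j → i = j)
    (hsurj : ∀ w : V, ∃ i, 1 ≤ i ∧ i ≤ n ∧ v i = w)
    (hpath : ∀ i, 1 ≤ i → i < n → G.Adj (v i) (v (i + 1)))
    (hnadj : ¬ G.Adj (v 1) (v n))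
    (hdeg : G.degree (v 1) + G.degree (v n) = n - 1)
    (S : Set V)
    (hS : S = {w | w ≠ v 1 ∧ w ≠ v n ∧ ¬ G.Adj w (v 1) ∧ ¬ G.Adj w (v n)}) :
    ∀ i, 1 ≤ i → i ≤ n → v i ∈ S → ∀ w, G.Adj (v i) w →
      ∃ j, 1 ≤ j ∧ j ≤ n ∧ w = v j ∧
        ((j < i ∧ v (j + 1) ∈ S) ∨ (i < j ∧ v (j - 1) ∈ S)) := by
  intro i hi1 hin hiS w hw
  obtain ⟨j, hj1, hjn, rfl⟩ := hsurj w
  rw [hS, Set.mem_setOf_eq] at hiS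
  obtain ⟨hine1, hinen, hix, hiy⟩ := hiS
  have hi1' : i ≠ 1 := fun h => hine1 (by rw [h])
  have hinn : i ≠ n := fun h => hinen (by rw [h])
  have hji : j ≠ i := by
    intro h
    rw [h] at hw
    exact G.irrefl hw
  rcases Nat.lt_or_ge j i with hlt | hge
  · -- case j < i : apply aux13 directly
    have hres := aux13 hn G hham v hinj hsurj hpath hnadj hdeg i j hi1 (by omega) hj1 hjn
      hix hiy hw hlt
    refine ⟨j, hj1, hjn, rfl, Or.inl ⟨hlt, ?_⟩⟩
    rw [hS, Set.mem_setOf_eq]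
    refine ⟨?_, ?_, hres.1, hres.2⟩
    · intro h
      have := hinj (j + 1) 1 (by omega) (by omega) (by omega) (by omega) h
      omega
    · intro h
      have := hinj (j + 1) n (by omega) (by omega) (by omega) (by omega) h
      omega
  · have hgt : i < j := by omega
    -- case i < j : apply aux13 to the reversed path
    set v' : ℕ → V := fun t => v (n + 1 - t) with hv'
    have hv'1 : v' 1 = v n := by
      simp only [hv']
      rw [show n + 1 - 1 = n from by omega]
    have hv'n : v' n = v 1 := by
      simp only [hv']
      rw [show n + 1 - n = 1 from by omega]
    have hinj' : ∀ a b, 1 ≤ a → a ≤ n → 1 ≤ b → b ≤ n → v' a = v' b → a = b := by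
      intro a b ha1 han hb1 hbn h
      simp only [hv'] at h
      have := hinj (n + 1 - a) (n + 1 - b) (by omega) (by omega) (by omega) (by omega) h
      omega
    have hsurj' : ∀ w : V, ∃ a, 1 ≤ a ∧ a ≤ n ∧ v' a = w := by
      intro w
      obtain ⟨a, h1, h2, rfl⟩ := hsurj w
      refine ⟨n + 1 - a, by omega, by omega, ?_⟩
      simp only [hv']
      rw [show n + 1 - (n + 1 - a) = a from by omega]
    have hpath' : ∀ a, 1 ≤ a → a < n → G.Adj (v' a) (v' (a + 1)) := by
      intro a h1 h2
      simp only [hv']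
      rw [show n + 1 - (a + 1) = n - a from by omega]
      have := hpath (n - a) (by omega) (by omega)
      rw [show n - a + 1 = n + 1 - a from by omega] at this
      exact this.symm
    have hnadj' : ¬ G.Adj (v' 1) (v' n) := by
      rw [hv'1, hv'n]
      exact fun h => hnadj h.symm
    have hdeg' : G.degree (v' 1) + G.degree (v' n) = n - 1 := by
      rw [hv'1, hv'n, Nat.add_comm]
      exact hdeg
    have hv'i : v' (n + 1 - i) = v i := by
      simp only [hv']
      rw [show n + 1 - (n + 1 - i) = i from by omega]
    have hv'j : v' (n + 1 - j) = v j := by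
      simp only [hv']
      rw [show n + 1 - (n + 1 - j) = j from by omega]
    have hres := aux13 hn G hham v' hinj' hsurj' hpath' hnadj' hdeg'
      (n + 1 - i) (n + 1 - j) (by omega) (by omega) (by omega) (by omega)
      (by rw [hv'i, hv'1]; exact hiy) (by rw [hv'i, hv'n]; exact hix)
      (by rw [hv'i, hv'j]; exact hw) (by omega)
    rw [hv'1, hv'n] at hres
    have hj2 : 2 ≤ j := by omega
    have hvj1 : v' (n + 1 - j + 1) = v (j - 1) := by
      simp only [hv']
      rw [show n + 1 - (n + 1 - j + 1) = j - 1 from by omega]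
    rw [hvj1] at hres
    refine ⟨j, hj1, hjn, rfl, Or.inr ⟨hgt, ?_⟩⟩
    rw [hS, Set.mem_setOf_eq]
    refine ⟨?_, ?_, hres.2, hres.1⟩
    · intro h
      have := hinj (j - 1) 1 (by omega) (by omega) (by omega) (by omega) h
      omega
    · intro h
      have := hinj (j - 1) n (by omega) (by omega) (by omega) (by omega) h
      omega
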